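/- arXiv:2103.06962 — 2 statements merged into one kernel-verified Lean document; each statement's English description precedes it below -/
import Mathlib

section
/- Let A ∈ ℝ^{n×n} and b ∈ ℝⁿ, and for j ≥ 1 let C_j(A,b) = [b, Ab, ..., A^{j−1}b] be the truncated controllability matrix. Then every block of j consecutive columns of C_t(A,b) (for t ≥ j) equals A^i C_j(A,b) for some i ≥ 0; consequently, if A is k-positive and the compounds (C_j(A,b))_[j] ≥ 0 for 1 ≤ j ≤ k, then all consecutive j-minors of C_t(A,b) are nonnegative for all 1 ≤ j ≤ k and t ≥ j. -/
open Matrix BigOperators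

/-- The `r`-th multiplicative compound matrix. -/
def compound {R : Type*} [CommRing R] {n m : ℕ} (X : Matrix (Fin n) (Fin m) R) (r : ℕ) :
    Matrix {s : Finset (Fin n) // s.card = r} {s : Finset (Fin m) // s.card = r} R :=
  fun I J => (X.submatrix (I.1.orderEmbOfFin I.2) (J.1.orderEmbOfFin J.2)).det

/-- The truncated controllability matrix `C_j(A,b) = [b, Ab, …, A^{j−1} b]`. -/
def ctrb {n : ℕ} (A : Matrix (Fin n) (Fin n) ℝ) (b : Fin n → ℝ) (j : ℕ) :
    Matrix (Fin n) (Fin j) ℝ :=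
  fun i q => (A ^ (q : ℕ)).mulVec b i

theorem cauchyBinet {R : Type*} [CommRing R] {j n : ℕ}
    (M : Matrix (Fin j) (Fin n) R) (N : Matrix (Fin n) (Fin j) R) :
    (M * N).det = ∑ S : {s : Finset (Fin n) // s.card = j},
      (M.submatrix id (S.1.orderEmbOfFin S.2)).det *
      (N.submatrix (S.1.orderEmbOfFin S.2) id).det := by
  classical
  have step1 : (M * N).det
      = ∑ f : Fin j → Fin n, (∏ p, M p (f p)) * (N.submatrix f id).det := by
    have h1 : (M * N) = fun p => ∑ l, M p l • N l := by
      ext p q; simp [Matrix.mul_apply, Finset.sum_apply]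
    calc (M * N).det = Matrix.detRowAlternating (fun p => ∑ l, M p l • N l) := by
          rw [← h1]; rfl
      _ = ∑ f : Fin j → Fin n, Matrix.detRowAlternating (fun p => M p (f p) • N (f p)) := by
          exact (Matrix.detRowAlternating).toMultilinearMap.map_sum (fun p l => M p l • N l)
      _ = ∑ f : Fin j → Fin n, (∏ p, M p (f p)) * (N.submatrix f id).det := by
          refine Finset.sum_congr rfl fun f _ => ?_
          calc Matrix.detRowAlternating (fun p => M p (f p) • N (f p))
              = (∏ p, M p (f p)) • Matrix.detRowAlternating (fun p => N (f p)) :=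
                (Matrix.detRowAlternating).map_smul_univ _ _
            _ = (∏ p, M p (f p)) * (N.submatrix f id).det := by rw [smul_eq_mul]; rfl
  have step2 : (M * N).det
      = ∑ f ∈ Finset.univ.filter (fun f : Fin j → Fin n => Function.Injective f),
        (∏ p, M p (f p)) * (N.submatrix f id).det := by
    rw [step1]
    symm
    apply Finset.sum_subset (Finset.filter_subset _ _)
    intro f _ hf
    simp only [Finset.mem_filter, Finset.mem_univ, true_and] at hf
    obtain ⟨p1, p2, h12, hne⟩ := Function.not_injective_iff.mp hf
    rw [Matrix.det_zero_of_row_eq hne (by ext q; simp [h12]), mul_zero]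
  have step3 : ∑ x : {s : Finset (Fin n) // s.card = j} × Equiv.Perm (Fin j),
        (∏ p, M p (x.1.1.orderEmbOfFin x.1.2 (x.2 p))) *
          (N.submatrix (fun p => x.1.1.orderEmbOfFin x.1.2 (x.2 p)) id).det
      = ∑ f ∈ Finset.univ.filter (fun f : Fin j → Fin n => Function.Injective f),
        (∏ p, M p (f p)) * (N.submatrix f id).det := by
    refine Finset.sum_bij (fun x _ => fun p => x.1.1.orderEmbOfFin x.1.2 (x.2 p)) ?_ ?_ ?_ ?_
    · intro x _
      simp only [Finset.mem_filter, Finset.mem_univ, true_and]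
      exact (x.1.1.orderEmbOfFin x.1.2).injective.comp x.2.injective
    · rintro ⟨S, σ⟩ _ ⟨T, τ⟩ _ hEq
      have hEq' : (fun p => S.1.orderEmbOfFin S.2 (σ p)) = (fun p => T.1.orderEmbOfFin T.2 (τ p)) :=
        hEq
      have hrange : (S.1 : Set (Fin n)) = (T.1 : Set (Fin n)) := by
        have h1 : Set.range (fun p => S.1.orderEmbOfFin S.2 (σ p)) = (S.1 : Set (Fin n)) := by
          rw [show (fun p => S.1.orderEmbOfFin S.2 (σ p)) = (S.1.orderEmbOfFin S.2) ∘ σ from rfl,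
            σ.surjective.range_comp, Finset.range_orderEmbOfFin]
        have h2 : Set.range (fun p => T.1.orderEmbOfFin T.2 (τ p)) = (T.1 : Set (Fin n)) := by
          rw [show (fun p => T.1.orderEmbOfFin T.2 (τ p)) = (T.1.orderEmbOfFin T.2) ∘ τ from rfl,
            τ.surjective.range_comp, Finset.range_orderEmbOfFin]
        rw [← h1, ← h2, hEq']
      have hST : S = T := Subtype.ext (Finset.coe_inj.mp hrange)
      subst hST
      have hστ : σ = τ := Equiv.coe_fn_injective (by
        funext p
        exact (S.1.orderEmbOfFin S.2).injective (congrFun hEq' p))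
      rw [hστ]
    · intro f hf
      simp only [Finset.mem_filter, Finset.mem_univ, true_and] at hf
      set S : Finset (Fin n) := Finset.image f Finset.univ with hSdef
      have hS : S.card = j := by
        rw [Finset.card_image_of_injective _ hf, Finset.card_univ, Fintype.card_fin]
      have hmem : ∀ p, f p ∈ S := fun p => Finset.mem_image_of_mem _ (Finset.mem_univ p)
      set σ' : Fin j → Fin j := fun p => (S.orderIsoOfFin hS).symm ⟨f p, hmem p⟩ with hσ'
      have hσinj : Function.Injective σ' := by
        intro p q h
        apply hf
        have h2 := congrArg (fun z => ((S.orderIsoOfFin hS) z : Fin n)) h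
        simp only [hσ', OrderIso.apply_symm_apply] at h2
        exact h2
      have hσbij : Function.Bijective σ' := Finite.injective_iff_bijective.mp hσinj
      refine ⟨⟨⟨S, hS⟩, Equiv.ofBijective σ' hσbij⟩, Finset.mem_univ _, ?_⟩
      funext p
      show S.orderEmbOfFin hS (σ' p) = f p
      rw [← Finset.coe_orderIsoOfFin_apply, hσ', OrderIso.apply_symm_apply]
    · intro x _
      rfl
  rw [step2, ← step3, Fintype.sum_prod_type]
  refine Finset.sum_congr rfl fun S _ => ?_
  have hdetM : (M.submatrix id (S.1.orderEmbOfFin S.2)).det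
      = ∑ σ : Equiv.Perm (Fin j), (Equiv.Perm.sign σ : R) * ∏ p, M p (S.1.orderEmbOfFin S.2 (σ p)) := by
    rw [← Matrix.det_transpose, Matrix.det_apply']
    rfl
  rw [hdetM, Finset.sum_mul]
  refine Finset.sum_congr rfl fun σ _ => ?_
  have hperm : (N.submatrix (fun p => S.1.orderEmbOfFin S.2 (σ p)) id).det
      = (Equiv.Perm.sign σ : R) * (N.submatrix (S.1.orderEmbOfFin S.2) id).det := by
    have : N.submatrix (fun p => S.1.orderEmbOfFin S.2 (σ p)) id
        = (N.submatrix (S.1.orderEmbOfFin S.2) id).submatrix σ id := rfl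
    rw [this, Matrix.det_permute]
  rw [hperm]
  ring

theorem compound_one_nonneg {n j : ℕ} (I J : {s : Finset (Fin n) // s.card = j}) :
    0 ≤ compound (1 : Matrix (Fin n) (Fin n) ℝ) j I J := by
  classical
  by_cases hIJ : I = J
  · subst hIJ
    have : compound (1 : Matrix (Fin n) (Fin n) ℝ) j I I
        = ((1 : Matrix (Fin j) (Fin j) ℝ)).det := by
      unfold compound
      congr 1
      ext p q
      simp only [Matrix.submatrix_apply, Matrix.one_apply]
      by_cases h : p = q
      · simp [h]
      · rw [if_neg h, if_neg (fun hc => h ((I.1.orderEmbOfFin I.2).injective hc))]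
    rw [this, Matrix.det_one]; norm_num
  · have hne : (J.1 \ I.1).Nonempty := by
      rw [Finset.sdiff_nonempty]
      intro hsub
      exact hIJ (Subtype.ext (Finset.eq_of_subset_of_card_le hsub (by rw [I.2, J.2])).symm)
    obtain ⟨x, hx⟩ := hne
    rw [Finset.mem_sdiff] at hx
    have hxr : x ∈ Set.range (J.1.orderEmbOfFin J.2) := by
      rw [Finset.range_orderEmbOfFin]; exact hx.1
    obtain ⟨q, hq⟩ := hxr
    have : compound (1 : Matrix (Fin n) (Fin n) ℝ) j I J = 0 := by
      apply Matrix.det_eq_zero_of_column_eq_zero q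
      intro p
      simp only [Matrix.submatrix_apply, Matrix.one_apply]
      rw [if_neg]
      intro hc
      apply hx.2
      rw [← hq, ← hc]
      exact Finset.orderEmbOfFin_mem I.1 I.2 p
    rw [this]
theorem compound_pow_nonneg {n k : ℕ} (A : Matrix (Fin n) (Fin n) ℝ)
    (hA : ∀ j, 1 ≤ j → j ≤ k → ∀ I J, 0 ≤ compound A j I J)
    (i : ℕ) : ∀ j, 1 ≤ j → j ≤ k → ∀ I J, 0 ≤ compound (A ^ i) j I J := by
  induction i with
  | zero => intro j _ _ I J; rw [pow_zero]; exact compound_one_nonneg I J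
  | succ i ih =>
    intro j hj1 hjk I J
    have hsplit : (A ^ (i + 1)).submatrix (I.1.orderEmbOfFin I.2) (J.1.orderEmbOfFin J.2)
        = (A ^ i).submatrix (I.1.orderEmbOfFin I.2) id * A.submatrix id (J.1.orderEmbOfFin J.2) := by
      ext p q
      simp [pow_succ, Matrix.mul_apply]
    unfold compound
    rw [hsplit, cauchyBinet]
    apply Finset.sum_nonneg
    intro S _
    apply mul_nonneg
    · rw [Matrix.submatrix_submatrix]
      simpa [compound] using ih j hj1 hjk I S
    · rw [Matrix.submatrix_submatrix]
      simpa [compound] using hA j hj1 hjk S J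

/-- Every block of `j` consecutive columns of `C_t(A,b)` equals `A^i C_j(A,b)`;
consequently, if `A` is `k`-positive and `(C_j(A,b))_[j] ≥ 0` for `1 ≤ j ≤ k`, then all
consecutive `j`-minors of `C_t(A,b)` are nonnegative for `1 ≤ j ≤ k` and `t ≥ j`. -/
theorem ctrb_consecutive_cols_and_minors {n : ℕ} (k : ℕ)
    (A : Matrix (Fin n) (Fin n) ℝ) (b : Fin n → ℝ)
    (hA : ∀ j, 1 ≤ j → j ≤ k → ∀ I J, 0 ≤ compound A j I J)
    (hC : ∀ j, 1 ≤ j → j ≤ k → ∀ I J, 0 ≤ compound (ctrb A b j) j I J) :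
    (∀ t j i : ℕ, ∀ (h : i + j ≤ t),
      (fun (p : Fin n) (q : Fin j) => ctrb A b t p (⟨i + q.1, by omega⟩ : Fin t)) =
        (A ^ i) * ctrb A b j) ∧
    (∀ j t, 1 ≤ j → j ≤ k → j ≤ t → ∀ a i : ℕ, ∀ (ha : a + j ≤ n) (hi : i + j ≤ t),
      0 ≤ ((ctrb A b t).submatrix (fun s : Fin j => (⟨a + s.1, by omega⟩ : Fin n))
        (fun s : Fin j => (⟨i + s.1, by omega⟩ : Fin t))).det) := by
  classical
  have hblock : ∀ t j i : ℕ, ∀ (h : i + j ≤ t),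
      (fun (p : Fin n) (q : Fin j) => ctrb A b t p (⟨i + q.1, by omega⟩ : Fin t)) =
        (A ^ i) * ctrb A b j := by
    intro t j i h
    funext p q
    show (A ^ (i + q.1)).mulVec b p = ((A ^ i) * ctrb A b j) p q
    rw [pow_add, ← Matrix.mulVec_mulVec]
    simp [Matrix.mul_apply, Matrix.mulVec, dotProduct, ctrb]
  refine ⟨hblock, ?_⟩
  intro j t hj1 hjk hjt a i ha hi
  set rowf : Fin j → Fin n := fun s => (⟨a + s.1, by omega⟩ : Fin n) with hrowf
  have key : (ctrb A b t).submatrix rowf (fun s : Fin j => (⟨i + s.1, by omega⟩ : Fin t))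
      = (A ^ i).submatrix rowf id * ctrb A b j := by
    funext p q
    have := congrFun (congrFun (hblock t j i hi) (rowf p)) q
    show ctrb A b t (rowf p) _ = _
    rw [this]
    simp [Matrix.mul_apply]
  rw [key]
  have hsplit : (A ^ i).submatrix rowf id * ctrb A b j
      = (A ^ i).submatrix rowf (id : Fin n → Fin n) * (ctrb A b j) := rfl
  rw [cauchyBinet]
  apply Finset.sum_nonneg
  intro S _
  have hmono : StrictMono rowf := by
    intro x y hxy
    simp only [hrowf, Fin.lt_def]
    exact Nat.add_lt_add_left hxy a
  set I : Finset (Fin n) := Finset.image rowf Finset.univ with hIdef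
  have hI : I.card = j := by
    rw [Finset.card_image_of_injective _ hmono.injective, Finset.card_univ, Fintype.card_fin]
  have hrowfeq : rowf = I.orderEmbOfFin hI :=
    Finset.orderEmbOfFin_unique hI (fun x => Finset.mem_image_of_mem _ (Finset.mem_univ x)) hmono
  apply mul_nonneg
  · rw [Matrix.submatrix_submatrix, Function.comp_id, hrowfeq]
    exact compound_pow_nonneg A hA i j hj1 hjk ⟨I, hI⟩ S
  · have hid : (id : Fin j → Fin j)
        = (Finset.univ : Finset (Fin j)).orderEmbOfFin (by simp) :=
      Finset.orderEmbOfFin_unique _ (fun x => Finset.mem_univ _) strictMono_id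
    rw [hid]
    exact hC j hj1 hjk S ⟨Finset.univ, by simp⟩
end

section
/- A transfer function G(z) = Σ_{i=1}^{n} rᵢ/(z − pᵢ) with distinct nonnegative poles pᵢ ≥ 0 and positive residues rᵢ > 0 admits a minimal symmetric realization (A, b, bᵀ) with A = diag(pₙ, …, p₁) and bᵢ = √(r_{n−i+1}); for this realization, A is totally positive and the truncated controllability matrices C_j(A,b) = [b, Ab, …, A^{j−1}b] coincide with (generalized Vandermonde-type) totally positive matrices for all j ≥ 1, provided p_n < p_{n-1} < ... < p_1. -/
open Matrix BigOperators

open Polynomial Finset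

noncomputable def posRoots (f : ℝ[X]) : Finset ℝ := f.roots.toFinset.filter (fun x => 0 < x)

lemma mem_posRoots {f : ℝ[X]} (hf : f ≠ 0) {x : ℝ} :
    x ∈ posRoots f ↔ 0 < x ∧ f.eval x = 0 := by
  simp [posRoots, Multiset.mem_toFinset, mem_roots hf, IsRoot, and_comm]

lemma rolle_count (f : ℝ[X]) (hf : f ≠ 0) (hf' : derivative f ≠ 0) :
    (posRoots f).card ≤ (posRoots (derivative f)).card + 1 := by
  rcases (posRoots f).eq_empty_or_nonempty with h | h
  · simp [h]
  · set T := posRoots f with hT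
    set M := T.max' h with hM
    have key : ∀ x : ℝ, ∃ c : ℝ, x ∈ T.erase M → c ∈ posRoots (derivative f) ∧ x < c ∧
        ∀ z ∈ T, x < z → c < z := by
      intro x
      by_cases hx : x ∈ T.erase M
      swap
      · exact ⟨0, fun h' => absurd h' hx⟩
      have hxT : x ∈ T := mem_of_mem_erase hx
      have hxM : x ≠ M := ne_of_mem_erase hx
      have hxltM : x < M := lt_of_le_of_ne (le_max' T x hxT) hxM
      have hne : ({z ∈ T | x < z} : Finset ℝ).Nonempty := ⟨M, by
        simp only [mem_filter]; exact ⟨max'_mem T h, hxltM⟩⟩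
      set y := ({z ∈ T | x < z} : Finset ℝ).min' hne with hy
      have hyT : y ∈ T ∧ x < y := by
        have := min'_mem _ hne
        rw [mem_filter] at this; exact this
      obtain ⟨c, hc, hc0⟩ := exists_deriv_eq_zero (f := fun t => f.eval t) hyT.2
        (f.continuous_aeval.continuousOn.congr (by
          intro z _; simp [aeval_def, eval₂_eq_eval_map]))
        (by show f.eval x = f.eval y
            rw [((mem_posRoots hf).1 hxT).2, ((mem_posRoots hf).1 hyT.1).2])
      rw [Polynomial.deriv] at hc0
      refine ⟨c, fun _ => ⟨(mem_posRoots hf').2 ⟨lt_trans ((mem_posRoots hf).1 hxT).1 hc.1, hc0⟩,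
        hc.1, ?_⟩⟩
      intro z hz hxz
      exact lt_of_lt_of_le hc.2 (min'_le _ z (by simp [hz, hxz]))
    choose g hg using key
    have hcard : (T.erase M).card ≤ (posRoots (derivative f)).card := by
      apply Finset.card_le_card_of_injOn g (fun x hx => (hg x hx).1)
      intro x₁ h₁ x₂ h₂ hgeq
      by_contra hne
      rcases lt_or_gt_of_ne hne with hlt | hlt
      · have := (hg x₁ h₁).2.2 x₂ (mem_of_mem_erase h₂) hlt
        have := (hg x₂ h₂).2.1
        linarith [hgeq ▸ this]
      · have := (hg x₂ h₂).2.2 x₁ (mem_of_mem_erase h₁) hlt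
        have := (hg x₁ h₁).2.1
        linarith [hgeq ▸ this]
    have h2 := Finset.card_erase_of_mem (max'_mem T h)
    rw [← hM] at h2
    omega

/-- Descartes-type bound: a nonzero real polynomial has fewer positive roots than monomials. -/
lemma descartes : ∀ N, ∀ f : ℝ[X], f.natDegree ≤ N → f ≠ 0 →
    (posRoots f).card < f.support.card := by
  intro N
  induction N with
  | zero =>
    intro f hd hf
    have hc : (posRoots f).card = 0 := by
      rw [Finset.card_eq_zero, Finset.eq_empty_iff_forall_notMem]
      intro x hx
      obtain ⟨hx0, hxe⟩ := (mem_posRoots hf).1 hx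
      rw [eq_C_of_natDegree_eq_zero (Nat.le_zero.1 hd)] at hxe hf
      simp at hxe; simp [hxe] at hf
    rw [hc]
    exact Finset.card_pos.2 (nonempty_support_iff.2 hf)
  | succ N ih =>
    intro f hd hf
    rcases Nat.eq_zero_or_pos f.natTrailingDegree with hk | hk
    · -- constant coefficient nonzero
      rcases Nat.eq_zero_or_pos f.natDegree with hd0 | hd0
      · exact ih f (by omega) hf
      have h0supp : 0 ∈ f.support := by
        rw [← hk]; exact natTrailingDegree_mem_support_of_nonzero hf
      have hf' : derivative f ≠ 0 := by
        intro h
        exact absurd (natDegree_eq_zero_of_derivative_eq_zero h) (by omega)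
      have hdsupp : f.derivative.support.card + 1 ≤ f.support.card := by
        have : f.derivative.support.card ≤ (f.support.erase 0).card := by
          apply Finset.card_le_card_of_injOn (· + 1)
          · intro a ha
            rw [Finset.mem_coe, Finset.mem_erase]
            exact ⟨Nat.succ_ne_zero a, (mem_support_derivative (p := f) (n := a)).1 ha⟩
          · intro a _ b _ h; simpa using h
        rw [Finset.card_erase_of_mem h0supp] at this
        have := Finset.card_pos.2 ⟨0, h0supp⟩
        omega
      have hih := ih f.derivative (by have := f.natDegree_derivative_le; omega) hf'
      have := rolle_count f hf hf'
      omega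
    · -- factor out X^k
      set k := f.natTrailingDegree with hkdef
      obtain ⟨q, hq⟩ : X ^ k ∣ f := X_pow_dvd_iff.2 fun d hdk =>
        coeff_eq_zero_of_lt_natTrailingDegree hdk
      have hq0 : q ≠ 0 := fun h => hf (by rw [hq, h, mul_zero])
      have hsupp : f.support.card = q.support.card := by
        apply Finset.card_bij (fun a _ => a - k)
        · intro a ha
          have hka : k ≤ a := natTrailingDegree_le_of_mem_supp a ha
          rw [mem_support_iff] at ha ⊢
          rw [hq, coeff_X_pow_mul'] at ha
          simpa [hka] using ha
        · intro a ha b hb h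
          have hka : k ≤ a := natTrailingDegree_le_of_mem_supp a ha
          have hkb : k ≤ b := natTrailingDegree_le_of_mem_supp b hb
          omega
        · intro b hb
          refine ⟨b + k, ?_, by omega⟩
          rw [mem_support_iff] at hb ⊢
          rw [hq, coeff_X_pow_mul]
          exact hb
      have hroots : posRoots f = posRoots q := by
        ext x
        by_cases hx0 : 0 < x
        · rw [mem_posRoots hf, mem_posRoots hq0, hq]
          simp only [eval_mul, eval_pow, eval_X, mul_eq_zero]
          constructor
          · rintro ⟨h1, h2 | h2⟩
            · exact absurd h2 (pow_ne_zero k (ne_of_gt hx0))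
            · exact ⟨h1, h2⟩
          · rintro ⟨h1, h2⟩; exact ⟨h1, Or.inr h2⟩
        · simp [mem_posRoots hf, mem_posRoots hq0, hx0]
      have hqd : q.natDegree ≤ N := by
        have : f.natDegree = k + q.natDegree := by
          rw [hq, natDegree_mul (pow_ne_zero k X_ne_zero) hq0, natDegree_X_pow]
        omega
      rw [hroots, hsupp]
      exact ih q hqd hq0

/-- Generalized Vandermonde determinant with positive increasing nodes and increasing
natural exponents is positive. -/
lemma gvd_pos : ∀ m (x : Fin m → ℝ) (e : Fin m → ℕ), StrictMono x → (∀ i, 0 < x i) →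
    StrictMono e → 0 < Matrix.det (Matrix.of fun a b => x a ^ e b) := by
  intro m
  induction m with
  | zero => intro x e _ _ _; simp [Matrix.det_fin_zero]
  | succ m ih =>
    intro x e hx hx0 he
    -- row-varying matrix
    set Mrow : ℝ → Matrix (Fin (m+1)) (Fin (m+1)) ℝ :=
      fun t => Matrix.of fun a b => if a = Fin.last m then t ^ e b else x a ^ e b with hMrow
    have hMorig : Mrow (x (Fin.last m)) = Matrix.of fun a b => x a ^ e b := by
      ext a b; by_cases h : a = Fin.last m <;> simp [hMrow, h]
    -- cofactors along the last row
    set cof : Fin (m+1) → ℝ :=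
      fun b => (-1 : ℝ) ^ ((Fin.last m : ℕ) + (b : ℕ)) *
        ((Mrow 0).submatrix (Fin.last m).succAbove b.succAbove).det with hcof
    have hsub : ∀ (t : ℝ) (b : Fin (m+1)), (Mrow t).submatrix (Fin.last m).succAbove b.succAbove
        = (Mrow 0).submatrix (Fin.last m).succAbove b.succAbove := by
      intro t b
      ext a c
      simp only [Matrix.submatrix_apply, hMrow, Fin.succAbove_last, Matrix.of_apply]
      rw [if_neg (Fin.castSucc_lt_last a).ne, if_neg (Fin.castSucc_lt_last a).ne]
    set P : ℝ[X] := ∑ b : Fin (m+1), C (cof b) * X ^ (e b) with hP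
    have hPeval : ∀ t, P.eval t = (Mrow t).det := by
      intro t
      rw [Matrix.det_succ_row (Mrow t) (Fin.last m), hP]
      simp only [eval_finset_sum, eval_mul, eval_C, eval_pow, eval_X]
      refine Finset.sum_congr rfl fun b _ => ?_
      rw [hsub t b]
      have hentry : Mrow t (Fin.last m) b = t ^ e b := by simp [hMrow]
      rw [hentry]
      simp only [hcof]
      ring
    -- evaluation at original nodes
    have horig : P.eval (x (Fin.last m)) = Matrix.det (Matrix.of fun a b => x a ^ e b) := by
      rw [hPeval, hMorig]
    -- roots at the smaller nodes
    have hroot : ∀ a : Fin m, P.eval (x a.castSucc) = 0 := by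
      intro a
      rw [hPeval]
      apply Matrix.det_zero_of_row_eq (i_ne_j := (Fin.castSucc_lt_last a).ne)
      ext b
      simp [hMrow, (Fin.castSucc_lt_last a).ne]
    -- support bound
    have hsupp : P.support ⊆ Finset.image e Finset.univ := by
      intro d hd
      rw [Polynomial.mem_support_iff] at hd
      by_contra hde
      apply hd
      simp only [hP, Polynomial.finset_sum_coeff, Polynomial.coeff_C_mul,
        Polynomial.coeff_X_pow]
      apply Finset.sum_eq_zero
      intro b _
      have hne : d ≠ e b := fun h => hde (by simp [h])
      simp [hne]
    -- the top cofactor is positive (induction hypothesis)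
    have hcoflast : 0 < cof (Fin.last m) := by
      show 0 < (-1 : ℝ) ^ ((Fin.last m : ℕ) + (Fin.last m : ℕ)) *
        ((Mrow 0).submatrix (Fin.last m).succAbove (Fin.last m).succAbove).det
      have : ((Mrow 0).submatrix (Fin.last m).succAbove (Fin.last m).succAbove)
          = Matrix.of fun a b : Fin m => x a.castSucc ^ e b.castSucc := by
        ext a b
        simp only [Matrix.submatrix_apply, Fin.succAbove_last, hMrow, Matrix.of_apply]
        rw [if_neg (Fin.castSucc_lt_last a).ne]
      rw [this]
      have hpos := ih (fun a => x a.castSucc) (fun b => e b.castSucc)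
        (hx.comp Fin.strictMono_castSucc) (fun a => hx0 _) (he.comp Fin.strictMono_castSucc)
      have hsign : (-1 : ℝ) ^ ((Fin.last m : ℕ) + (Fin.last m : ℕ)) = 1 := by
        rw [← two_mul, pow_mul]; norm_num
      rw [hsign, one_mul]
      exact hpos
    have hcoeff : P.coeff (e (Fin.last m)) = cof (Fin.last m) := by
      rw [hP, Polynomial.finset_sum_coeff]
      rw [Finset.sum_eq_single (Fin.last m)]
      · simp [Polynomial.coeff_C_mul, Polynomial.coeff_X_pow]
      · intro b _ hb
        have hne : e (Fin.last m) ≠ e b := fun h => hb (he.injective h.symm)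
        simp [Polynomial.coeff_C_mul, Polynomial.coeff_X_pow, hne]
      · simp
    have hPne : P ≠ 0 := by
      intro h
      rw [h, Polynomial.coeff_zero] at hcoeff
      exact hcoflast.ne' hcoeff.symm
    -- handle m = 0 directly
    by_cases hm : m = 0
    · subst hm
      rw [Matrix.det_fin_one]
      exact pow_pos (hx0 0) _
    -- from here on m ≥ 1
    have hm1 : 1 ≤ m := Nat.one_le_iff_ne_zero.2 hm
    -- the small nodes give m distinct positive roots
    have himg : Finset.image (fun a : Fin m => x a.castSucc) Finset.univ ⊆ posRoots P := by
      intro t ht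
      simp only [Finset.mem_image] at ht
      obtain ⟨a, _, rfl⟩ := ht
      exact (mem_posRoots hPne).2 ⟨hx0 _, hroot a⟩
    have hcard_img : (Finset.image (fun a : Fin m => x a.castSucc) Finset.univ).card = m := by
      rw [Finset.card_image_of_injective _
        (fun a b hab => Fin.castSucc_injective m (hx.injective hab))]
      simp
    have hcard_le : (posRoots P).card ≤ m := by
      have h1 := descartes (P.natDegree) P le_rfl hPne
      have h2 : P.support.card ≤ m + 1 := le_trans (Finset.card_le_card hsupp)
        (le_trans Finset.card_image_le (by simp))
      omega
    have hroots_eq : posRoots P = Finset.image (fun a : Fin m => x a.castSucc) Finset.univ :=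
      (Finset.eq_of_subset_of_card_le himg (by rw [hcard_img]; exact hcard_le)).symm
    -- degree and leading coefficient
    have hdegle : P.natDegree ≤ e (Fin.last m) := by
      apply Polynomial.natDegree_le_iff_coeff_eq_zero.2
      intro d hd
      by_contra hc
      have := hsupp (Polynomial.mem_support_iff.2 hc)
      simp only [Finset.mem_image] at this
      obtain ⟨b, _, rfl⟩ := this
      exact absurd hd (not_lt.2 (he.monotone (Fin.le_last b)))
    have hdeg : P.natDegree = e (Fin.last m) :=
      le_antisymm hdegle (Polynomial.le_natDegree_of_ne_zero (hcoeff ▸ hcoflast.ne'))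
    have hlead : 0 < P.leadingCoeff := by
      rw [Polynomial.leadingCoeff, hdeg, hcoeff]; exact hcoflast
    have hdegpos : 0 < P.degree := by
      rw [Polynomial.degree_eq_natDegree hPne]
      have : 1 ≤ e (Fin.last m) := by
        have := he (show (0 : Fin (m+1)) < Fin.last m by
          rw [Fin.lt_iff_val_lt_val]; simp [Fin.last]; omega)
        omega
      exact_mod_cast by rw [hdeg]; exact_mod_cast this
    have htend := Polynomial.tendsto_atTop_of_leadingCoeff_nonneg P hdegpos hlead.le
    obtain ⟨T, hT1, hT2⟩ := ((htend.eventually_ge_atTop 1).and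
      (Filter.eventually_ge_atTop (x (Fin.last m) + 1))).exists
    -- conclude positivity at x last
    rw [← horig]
    by_contra hle
    push_neg at hle
    have hcont : ContinuousOn (fun t => P.eval t) (Set.Icc (x (Fin.last m)) T) :=
      (Polynomial.continuous_aeval P).continuousOn.congr (by intro z _; simp [aeval_def, eval₂_eq_eval_map])
    have hxT : x (Fin.last m) ≤ T := by linarith
    have h0mem : (0 : ℝ) ∈ Set.Icc (P.eval (x (Fin.last m))) (P.eval T) :=
      ⟨hle, by linarith⟩
    obtain ⟨c, hc, hc0⟩ := intermediate_value_Icc hxT hcont h0mem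
    have hcpos : 0 < c := lt_of_lt_of_le (hx0 (Fin.last m)) hc.1
    have : c ∈ posRoots P := (mem_posRoots hPne).2 ⟨hcpos, hc0⟩
    rw [hroots_eq] at this
    simp only [Finset.mem_image] at this
    obtain ⟨a, _, ha⟩ := this
    have : x a.castSucc < x (Fin.last m) := hx (Fin.castSucc_lt_last a)
    rw [ha] at this
    exact absurd hc.1 (not_le.2 this)

lemma gvd_nonneg (m : ℕ) (x : Fin m → ℝ) (e : Fin m → ℕ) (hx : StrictMono x)
    (hx0 : ∀ i, 0 ≤ x i) (he : StrictMono e) :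
    0 ≤ Matrix.det (Matrix.of fun a b => x a ^ e b) := by
  match m with
  | 0 => simp [Matrix.det_fin_zero]
  | m + 1 =>
    by_cases hpos : ∀ i, 0 < x i
    · exact (gvd_pos _ x e hx hpos he).le
    · push_neg at hpos
      obtain ⟨i, hi⟩ := hpos
      have hx00 : x 0 = 0 := le_antisymm (by
        calc x 0 ≤ x i := hx.monotone (Fin.zero_le i)
        _ ≤ 0 := hi) (hx0 0)
      by_cases he0 : e 0 = 0
      · -- expand along first row
        rw [Matrix.det_succ_row_zero]
        rw [Finset.sum_eq_single 0]
        · have hsub : (Matrix.of fun a b => x a ^ e b).submatrix Fin.succ (0 : Fin (m+1)).succAbove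
              = Matrix.of fun a b : Fin m => x a.succ ^ e b.succ := by
            ext a b
            simp [Fin.succAbove_zero]
          have hpos' : 0 < ((Matrix.of fun a b => x a ^ e b).submatrix Fin.succ
              (0 : Fin (m+1)).succAbove).det := by
            rw [hsub]
            exact gvd_pos m (fun a => x a.succ) (fun b => e b.succ)
              (hx.comp (Fin.strictMono_succ))
              (fun a => lt_of_le_of_lt (hx00 ▸ le_refl (x 0)) (hx00 ▸ hx (Fin.succ_pos a)))
              (he.comp (Fin.strictMono_succ))
          have : (Matrix.of fun a b => x a ^ e b) 0 0 = 1 := by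
            simp [hx00, he0]
          rw [this]
          simpa using hpos'.le
        · intro b _ hb
          have hbe : 0 < e b := by
            have : e 0 < e b := he (Fin.pos_of_ne_zero hb)
            omega
          have : (Matrix.of fun a b => x a ^ e b) 0 b = 0 := by
            simp [hx00, zero_pow hbe.ne']
          rw [this]; ring
        · simp
      · have : (Matrix.of fun a b => x a ^ e b) 0 = 0 := by
          ext b
          have hbe : 0 < e b := by
            have : e 0 ≤ e b := he.monotone (Fin.zero_le b)
            omega
          simp [hx00, zero_pow hbe.ne']
        rw [Matrix.det_eq_zero_of_row_eq_zero 0 (fun j => congrFun this j)]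

/-- `G(z) = Σᵢ rᵢ/(z − pᵢ)` with distinct nonnegative poles `p₁ > … > pₙ ≥ 0` and positive
residues admits the minimal symmetric realization `A = diag(pₙ, …, p₁)`,
`bᵢ = √(r_{n−i+1})`, `c = bᵀ`: its Markov parameters are `b ⬝ Aᵗ b = Σᵢ rᵢ pᵢᵗ`, it is
controllable, `A` is totally positive, and every truncated controllability matrix
`C_j(A,b)` is totally positive. -/
theorem relaxation_totally_positive_realization {n : ℕ} (p r : Fin n → ℝ)
    (hp_anti : StrictAnti p) (hp_nonneg : ∀ i, 0 ≤ p i) (hr : ∀ i, 0 < r i) :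
    ∀ (A : Matrix (Fin n) (Fin n) ℝ) (b : Fin n → ℝ),
      A = Matrix.diagonal (fun i : Fin n => p i.rev) →
      b = (fun i : Fin n => Real.sqrt (r i.rev)) →
      (∀ t : ℕ, b ⬝ᵥ (A ^ t).mulVec b = ∑ i, r i * p i ^ t) ∧
      (ctrb A b n).rank = n ∧
      (∀ j, 1 ≤ j → j ≤ n → ∀ I J, 0 ≤ compound A j I J) ∧
      (∀ j, 1 ≤ j → ∀ rr, 1 ≤ rr → rr ≤ min n j →
        ∀ I J, 0 ≤ compound (ctrb A b j) rr I J) := by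
  rintro A b rfl rfl
  set d : Fin n → ℝ := fun i => p i.rev with hd
  set b : Fin n → ℝ := fun i => Real.sqrt (r i.rev) with hb
  have hb_pos : ∀ i, 0 < b i := fun i => Real.sqrt_pos.2 (hr _)
  have hd_mono : StrictMono d := by
    intro i j hij
    exact hp_anti (Fin.rev_lt_rev.2 hij)
  have hd_nonneg : ∀ i, 0 ≤ d i := fun i => hp_nonneg _
  have hpow : ∀ t : ℕ, (Matrix.diagonal d) ^ t = Matrix.diagonal (fun i => d i ^ t) := by
    intro t
    rw [Matrix.diagonal_pow]
    rfl
  have hctrb : ∀ (j : ℕ) (i : Fin n) (q : Fin j),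
      ctrb (Matrix.diagonal d) b j i q = b i * d i ^ (q : ℕ) := by
    intro j i q
    rw [ctrb, hpow, Matrix.mulVec_diagonal]
    ring
  refine ⟨?_, ?_, ?_, ?_⟩
  · -- Markov parameters
    intro t
    rw [hpow]
    have : ∀ i, b i * ((Matrix.diagonal fun i => d i ^ t).mulVec b) i
        = r i.rev * p i.rev ^ t := by
      intro i
      rw [Matrix.mulVec_diagonal]
      have : b i * b i = r i.rev := Real.mul_self_sqrt (hr _).le
      calc b i * (d i ^ t * b i) = b i * b i * d i ^ t := by ring
      _ = r i.rev * p i.rev ^ t := by rw [this]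
    rw [dotProduct]
    simp only [this]
    exact Fintype.sum_bijective Fin.rev Fin.rev_bijective _ _ (fun i => rfl)
  · -- rank
    have hdet : (ctrb (Matrix.diagonal d) b n).det ≠ 0 := by
      have heq : ctrb (Matrix.diagonal d) b n
          = Matrix.of fun i j => b i * Matrix.vandermonde d i j := by
        ext i q
        rw [hctrb]
        rfl
      rw [heq, Matrix.det_mul_column, Matrix.det_vandermonde]
      apply ne_of_gt
      apply mul_pos
      · exact Finset.prod_pos (fun i _ => hb_pos i)
      · apply Finset.prod_pos
        intro i _
        apply Finset.prod_pos
        intro j hj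
        rw [Finset.mem_Ioi] at hj
        exact sub_pos.2 (hd_mono hj)
    rw [Matrix.rank_of_isUnit]
    · exact Fintype.card_fin n
    · exact (Matrix.isUnit_iff_isUnit_det _).2 (isUnit_iff_ne_zero.2 hdet)
  · -- A totally positive
    intro j _ _ I J
    rw [compound]
    set f := I.1.orderEmbOfFin I.2 with hf
    set g := J.1.orderEmbOfFin J.2 with hg
    by_cases hIJ : I = J
    · subst hIJ
      have : (Matrix.diagonal d).submatrix f g = Matrix.diagonal (fun a => d (f a)) := by
        ext a c
        by_cases hac : a = c
        · subst hac
          simp [hf, hg]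
        · have : f a ≠ g c := fun h => hac (f.injective h)
          simp [Matrix.submatrix_apply, Matrix.diagonal_apply_ne _ this,
            Matrix.diagonal_apply_ne _ hac]
      rw [this, Matrix.det_diagonal]
      exact Finset.prod_nonneg fun a _ => hd_nonneg _
    · -- determinant is zero
      have hz : ((Matrix.diagonal d).submatrix f g).det = 0 := by
        rw [Matrix.det_apply']
        apply Finset.sum_eq_zero
        intro σ _
        have hex : ∃ a, f (σ a) ≠ g a := by
          by_contra hcon
          push_neg at hcon
          apply hIJ
          apply Subtype.ext
          apply Finset.coe_injective
          rw [← Finset.range_orderEmbOfFin I.1 I.2, ← Finset.range_orderEmbOfFin J.1 J.2]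
          show Set.range f = Set.range g
          ext u
          constructor
          · rintro ⟨a, rfl⟩
            exact ⟨σ.symm a, by rw [← hcon (σ.symm a)]; simp⟩
          · rintro ⟨a, rfl⟩
            exact ⟨σ a, hcon a⟩
        obtain ⟨a, ha⟩ := hex
        have hprod : (∏ i, (Matrix.diagonal d).submatrix (⇑f) (⇑g) (σ i) i) = 0 :=
          Finset.prod_eq_zero (Finset.mem_univ a)
            (by rw [Matrix.submatrix_apply]; exact Matrix.diagonal_apply_ne _ ha)
        rw [hprod, mul_zero]
      exact le_of_eq hz.symm
  · -- ctrb totally positive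
    intro j _ rr _ _ I J
    rw [compound]
    set f := I.1.orderEmbOfFin I.2 with hf
    set g := J.1.orderEmbOfFin J.2 with hg
    have heq : (ctrb (Matrix.diagonal d) b j).submatrix f g
        = Matrix.of fun a c => b (f a) * (Matrix.of fun a c => d (f a) ^ ((g c : ℕ))) a c := by
      ext a c
      rw [Matrix.submatrix_apply, hctrb]
      rfl
    rw [heq, Matrix.det_mul_column]
    apply mul_nonneg
    · exact Finset.prod_nonneg fun a _ => (hb_pos _).le
    · exact gvd_nonneg rr (fun a => d (f a)) (fun c => (g c : ℕ))
        (hd_mono.comp f.strictMono) (fun a => hd_nonneg _)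
        (fun c c' hcc => by exact_mod_cast g.strictMono hcc)
end
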